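/- Let d ≥ 1, let C¹_b(ℝ^d) be the Banach space of bounded continuously differentiable functions with bounded gradient and norm ‖u‖_{C¹} = sup|u| + sup|∇u|, and let I : C¹_b(ℝ^d) → C_b(ℝ^d) be Lipschitz with constant K₀, satisfy the global comparison property, and satisfy the locality assumption (with C¹ norms). Fix ε ∈ (0,1). Then there exist a constant Λ (depending only on d, K₀ and ε) and a family 𝒦 of linear functionals, each based at some point x ∈ ℝ^d and of the form L(u) = B·∇u(x) + C·u(x) + ∫_{ℝ^d∖{x}} ( u(y) − u(x) − 1_{B_1(x)}(y)·∇u(x)·(y−x) ) dμ(y) with B ∈ ℝ^d, C ∈ ℝ, μ a nonnegative Borel measure on ℝ^d∖{x}, |B| ≤ Λ, |C| ≤ Λ and ∫ min(1,|y−x|^{1+ε}) dμ(y) ≤ Λ (in particular, with no second-order diffusion part), such that: (i) for all u, v ∈ C^{1,ε}_b(ℝ^d) and all x ∈ ℝ^d there exists L ∈ 𝒦 based at x with I(u)(x) ≤ I(v)(x) + L(u − v); and consequently (ii) for every u ∈ C^{1,ε}_b(ℝ^d) and every x ∈ ℝ^d, I(u)(x) = inf over v ∈ C^{1,ε}_b(ℝ^d)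 of the sup over L ∈ 𝒦 based at x of ( I(v)(x) + L(u − v) ), the infimum being attained at v = u. -/

import Mathlib

set_option maxHeartbeats 1000000
set_option synthInstance.maxHeartbeats 400000


open MeasureTheory Metric Filter Set

noncomputable section

abbrev Euc (d : ℕ) := EuclideanSpace ℝ (Fin d)

variable {d : ℕ}

def supNorm (u : Euc d → ℝ) : ℝ := ⨆ x, |u x|

def gradSup (u : Euc d → ℝ) : ℝ := ⨆ x, ‖fderiv ℝ u x‖

/-- the `C¹` norm : `sup|u| + sup|∇u|` -/
def C1Norm (u : Euc d → ℝ) : ℝ := supNorm u + gradSup u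

/-- membership in `C¹_b(ℝ^d)` : bounded `C¹` functions with bounded gradient -/
def IsC1b (u : Euc d → ℝ) : Prop :=
  ContDiff ℝ 1 u ∧ ∃ M : ℝ, ∀ x, |u x| ≤ M ∧ ‖fderiv ℝ u x‖ ≤ M

/-- membership in `C^{1,γ}_b(ℝ^d)` : bounded `C¹` functions with bounded `γ`-Hölder gradient -/
def IsC1Holder (γ : ℝ) (u : Euc d → ℝ) : Prop :=
  IsC1b u ∧ ∃ M : ℝ, ∀ x y, ‖fderiv ℝ u x - fderiv ℝ u y‖ ≤ M * ‖x - y‖ ^ γ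

/-- membership in `C_b(ℝ^d)` -/
def IsCb (f : Euc d → ℝ) : Prop := Continuous f ∧ ∃ M : ℝ, ∀ x, |f x| ≤ M

def GCP (dom : (Euc d → ℝ) → Prop) (I : (Euc d → ℝ) → Euc d → ℝ) : Prop :=
  ∀ u v, dom u → dom v → (∀ y, u y ≤ v y) → ∀ x, u x = v x → I u x ≤ I v x

def LipWith (K₀ : ℝ) (dom : (Euc d → ℝ) → Prop) (N : (Euc d → ℝ) → ℝ)
    (I : (Euc d → ℝ) → Euc d → ℝ) : Prop :=
  ∀ u v, dom u → dom v → ∀ x, |I u x - I v x| ≤ K₀ * N (fun y => u y - v y)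

def localSup (r : ℝ) (u : Euc d → ℝ) : ℝ := ⨆ x ∈ closedBall (0 : Euc d) r, |u x|

def localGradSup (r : ℝ) (u : Euc d → ℝ) : ℝ :=
  ⨆ x ∈ closedBall (0 : Euc d) r, ‖fderiv ℝ u x‖

/-- the `C¹` norm restricted to the closed ball of radius `r` -/
def localC1Norm (r : ℝ) (u : Euc d → ℝ) : ℝ := localSup r u + localGradSup r u

def Locality (dom : (Euc d → ℝ) → Prop) (locN : ℝ → (Euc d → ℝ) → ℝ)
    (I : (Euc d → ℝ) → Euc d → ℝ) : Prop :=
  ∃ C₀ : ℝ, ∃ ω : ℝ → ℝ, (∀ r > (0 : ℝ), 0 < ω r) ∧ Tendsto ω atTop (nhds 0) ∧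
    ∃ r₀ : ℝ, ∀ r ≥ r₀, ∀ u v, dom u → dom v → ∀ x : Euc d, ‖x‖ ≤ r →
      |I u x - I v x| ≤ C₀ * locN (2 * r) (fun y => u y - v y)
        + C₀ * ω r * supNorm (fun y => u y - v y)

/-- the data of a Lévy-type functional with no diffusion part, based at `base` -/
structure Levy1Data (d : ℕ) where
  base : Euc d
  B : Euc d
  C : ℝ
  μ : Measure (Euc d)

/-- action of a drift–jump Lévy-type functional:
`B·∇u(x) + C u(x) + ∫ (u(y) - u(x) - 1_{B₁(x)}(y) ∇u(x)·(y-x)) dμ(y)` -/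
def Levy1Data.apply (L : Levy1Data d) (u : Euc d → ℝ) : ℝ :=
  fderiv ℝ u L.base L.B + L.C * u L.base
    + ∫ y, (u y - u L.base -
        Set.indicator (ball L.base 1) (fun z => fderiv ℝ u L.base (z - L.base)) y) ∂L.μ

def Levy1Bounds (Λ ε : ℝ) (L : Levy1Data d) : Prop :=
  ‖L.B‖ ≤ Λ ∧ |L.C| ≤ Λ ∧ L.μ {L.base} = 0 ∧
    (∫⁻ y, ENNReal.ofReal (min 1 (‖y - L.base‖ ^ (1 + ε))) ∂L.μ) ≤ ENNReal.ofReal Λ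

lemma mmx_inv {f : Euc d → ℝ} {f' : Euc d →L[ℝ] ℝ} {x : Euc d}
    (hf : HasFDerivAt f f' x) (hx : f x ≠ 0) :
    HasFDerivAt (fun y => (f y)⁻¹) ((-(f x ^ 2)⁻¹) • f') x := by
  have h := (hasFDerivAt_inv hx).comp x hf
  refine h.congr_fderiv ?_
  ext v
  simp [ContinuousLinearMap.smulRight_apply, mul_comm]

lemma mmx_lin (p : Euc d →L[ℝ] ℝ) (x y : Euc d) :
    HasFDerivAt (fun z : Euc d => p (z - x)) p y := by
  have := p.hasFDerivAt (x := y - x) |>.comp y ((hasFDerivAt_id y).sub_const x)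
  rwa [ContinuousLinearMap.comp_id] at this

lemma mmx_norm_smul (c : ℝ) (L : Euc d →L[ℝ] ℝ) : ‖c • L‖ = |c| * ‖L‖ := by
  rw [show ‖c • L‖ = ‖c‖ * ‖L‖ from norm_smul c L, Real.norm_eq_abs]

lemma mmx_nrm (x y : Euc d) {β : ℝ} (hβ : 1 < β) :
    HasFDerivAt (fun y : Euc d => ‖y - x‖ ^ β)
      ((β * ‖y - x‖ ^ (β - 2)) • innerSL ℝ (y - x)) y := by
  have h := (hasFDerivAt_norm_rpow (y - x) hβ).comp y ((hasFDerivAt_id y).sub_const x)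
  rwa [ContinuousLinearMap.comp_id] at h

lemma mmx_nrm_bound (x y : Euc d) {β : ℝ} (hβ : 1 < β) (hβ2 : β ≤ 2) :
    ‖(β * ‖y - x‖ ^ (β - 2)) • innerSL ℝ (y - x)‖ ≤ β * (1 + ‖y - x‖ ^ β) := by
  rw [mmx_norm_smul, innerSL_apply_norm, abs_mul,
    abs_of_pos (by linarith : (0:ℝ) < β),
    abs_of_nonneg (Real.rpow_nonneg (norm_nonneg _) _)]
  rcases eq_or_ne (‖y - x‖) 0 with h0 | h0
  · rw [h0, mul_zero]
    have h0b : (0:ℝ) ≤ (0:ℝ) ^ β := Real.rpow_nonneg le_rfl β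
    nlinarith
  · have hr : 0 < ‖y - x‖ := (norm_nonneg _).lt_of_ne' h0
    have h1 : ‖y - x‖ ^ (β - 2) * ‖y - x‖ = ‖y - x‖ ^ (β - 1) := by
      rw [← Real.rpow_add_one h0 (β - 2)]
      congr 1; ring
    rw [mul_assoc, h1]
    have h2 : ‖y - x‖ ^ (β - 1) ≤ 1 + ‖y - x‖ ^ β := by
      rcases le_or_gt (‖y - x‖) 1 with hle | hlt
      · have ha := Real.rpow_le_one (norm_nonneg _) hle (by linarith : (0:ℝ) ≤ β - 1)
        have hb := Real.rpow_nonneg (norm_nonneg (y - x)) β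
        linarith
      · have := Real.rpow_le_rpow_of_exponent_le hlt.le (by linarith : β - 1 ≤ β)
        linarith
    nlinarith

lemma mmx_piece (x : Euc d) {β : ℝ} (hβ : 1 < β) (hβ2 : β ≤ 2) (y : Euc d) :
    ∃ D : Euc d →L[ℝ] ℝ,
      HasFDerivAt (fun y : Euc d => ‖y - x‖ ^ β * (1 + ‖y - x‖ ^ β)⁻¹) D y ∧ ‖D‖ ≤ 4 := by
  obtain ⟨N, hN, hNb⟩ : ∃ N : Euc d →L[ℝ] ℝ, HasFDerivAt (fun y : Euc d => ‖y - x‖ ^ β) N y ∧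
      ‖N‖ ≤ β * (1 + ‖y - x‖ ^ β) := ⟨_, mmx_nrm x y hβ, mmx_nrm_bound x y hβ hβ2⟩
  set n := ‖y - x‖ ^ β with hndef
  have hn0 : 0 ≤ n := Real.rpow_nonneg (norm_nonneg _) _
  have h1n : (0:ℝ) < 1 + n := by linarith
  have hinvle : (1 + n)⁻¹ ≤ 1 := by
    rw [inv_le_one_iff₀]; right; linarith
  have hI : HasFDerivAt (fun y : Euc d => (1 + ‖y - x‖ ^ β)⁻¹)
      ((-((1 + n) ^ 2)⁻¹) • N) y := mmx_inv (hN.const_add 1) h1n.ne'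
  refine ⟨_, hN.mul hI, ?_⟩
  have e2 : ((1 + n) ^ 2)⁻¹ * ‖N‖ ≤ β * (1 + n)⁻¹ := by
    rw [sq, mul_inv]
    calc (1 + n)⁻¹ * (1 + n)⁻¹ * ‖N‖ ≤ (1 + n)⁻¹ * (1 + n)⁻¹ * (β * (1 + n)) :=
          mul_le_mul_of_nonneg_left hNb (by positivity)
      _ = β * (1 + n)⁻¹ := by field_simp; try ring
  have e3 : (1 + n)⁻¹ * ‖N‖ ≤ β := by
    calc (1 + n)⁻¹ * ‖N‖ ≤ (1 + n)⁻¹ * (β * (1 + n)) :=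
          mul_le_mul_of_nonneg_left hNb (by positivity)
      _ = β := by field_simp; try ring
  calc ‖n • ((-((1 + n) ^ 2)⁻¹) • N) + (1 + n)⁻¹ • N‖
      ≤ ‖n • ((-((1 + n) ^ 2)⁻¹) • N)‖ + ‖(1 + n)⁻¹ • N‖ := norm_add_le _ _
    _ = n * (|(-((1 + n) ^ 2)⁻¹)| * ‖N‖) + (1 + n)⁻¹ * ‖N‖ := by
        rw [mmx_norm_smul, mmx_norm_smul, mmx_norm_smul, abs_of_nonneg hn0,
          abs_of_nonneg (by positivity : (0:ℝ) ≤ (1+n)⁻¹)]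
    _ = n * (((1 + n) ^ 2)⁻¹ * ‖N‖) + (1 + n)⁻¹ * ‖N‖ := by
        rw [abs_neg, abs_of_nonneg (by positivity : (0:ℝ) ≤ ((1+n)^2)⁻¹)]
    _ ≤ n * (β * (1 + n)⁻¹) + β := by
        have := mul_le_mul_of_nonneg_left e2 hn0
        linarith
    _ = β * (n * (1 + n)⁻¹) + β := by ring
    _ ≤ β * 1 + β := by
        have hfr : n * (1 + n)⁻¹ ≤ 1 := by
          rw [← div_eq_mul_inv, div_le_one h1n]; linarith
        have := mul_le_mul_of_nonneg_left hfr (by linarith : (0:ℝ) ≤ β)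
        linarith
    _ ≤ 4 := by linarith

lemma mmx_piece_lin (x : Euc d) (p : Euc d →L[ℝ] ℝ) (y : Euc d) :
    ∃ D : Euc d →L[ℝ] ℝ,
      HasFDerivAt (fun y : Euc d => p (y - x) * (1 + ‖y - x‖ ^ (2:ℝ))⁻¹) D y ∧ ‖D‖ ≤ 3 * ‖p‖ := by
  have h2 : (1:ℝ) < 2 := one_lt_two
  obtain ⟨N, hN, hNb⟩ : ∃ N : Euc d →L[ℝ] ℝ, HasFDerivAt (fun y : Euc d => ‖y - x‖ ^ (2:ℝ)) N y ∧
      ‖N‖ ≤ 2 * (1 + ‖y - x‖ ^ (2:ℝ)) := ⟨_, mmx_nrm x y h2, mmx_nrm_bound x y h2 le_rfl⟩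
  set n := ‖y - x‖ ^ (2:ℝ) with hndef
  have hn0 : 0 ≤ n := Real.rpow_nonneg (norm_nonneg _) _
  have h1n : (0:ℝ) < 1 + n := by linarith
  have hI : HasFDerivAt (fun y : Euc d => (1 + ‖y - x‖ ^ (2:ℝ))⁻¹)
      ((-((1 + n) ^ 2)⁻¹) • N) y := mmx_inv (hN.const_add 1) h1n.ne'
  have hlin := mmx_lin p x y
  refine ⟨_, hlin.mul hI, ?_⟩
  have hrn : ‖y - x‖ ≤ 1 + n := by
    have hn2 : n = ‖y - x‖ ^ (2:ℕ) := by
      rw [hndef, show ((2:ℝ)) = ((2:ℕ):ℝ) by norm_num, Real.rpow_natCast]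
    rw [hn2]
    nlinarith [sq_nonneg (‖y - x‖ - 1), norm_nonneg (y - x)]
  have hpz : |p (y - x)| ≤ ‖p‖ * ‖y - x‖ := by
    rw [← Real.norm_eq_abs]; exact p.le_opNorm _
  have e2 : ((1 + n) ^ 2)⁻¹ * ‖N‖ ≤ 2 * (1 + n)⁻¹ := by
    rw [sq, mul_inv]
    calc (1 + n)⁻¹ * (1 + n)⁻¹ * ‖N‖ ≤ (1 + n)⁻¹ * (1 + n)⁻¹ * (2 * (1 + n)) :=
          mul_le_mul_of_nonneg_left hNb (by positivity)
      _ = 2 * (1 + n)⁻¹ := by field_simp; try ring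
  have hinvle : (1 + n)⁻¹ ≤ 1 := by rw [inv_le_one_iff₀]; right; linarith
  have hfr : ‖y - x‖ * (1 + n)⁻¹ ≤ 1 := by
    rw [← div_eq_mul_inv, div_le_one h1n]; linarith
  calc ‖p (y - x) • ((-((1 + n) ^ 2)⁻¹) • N) + (1 + n)⁻¹ • p‖
      ≤ ‖p (y - x) • ((-((1 + n) ^ 2)⁻¹) • N)‖ + ‖(1 + n)⁻¹ • p‖ := norm_add_le _ _
    _ = |p (y - x)| * (|(-((1 + n) ^ 2)⁻¹)| * ‖N‖) + (1 + n)⁻¹ * ‖p‖ := by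
        rw [mmx_norm_smul, mmx_norm_smul, mmx_norm_smul,
          abs_of_nonneg (by positivity : (0:ℝ) ≤ (1+n)⁻¹)]
    _ = |p (y - x)| * (((1 + n) ^ 2)⁻¹ * ‖N‖) + (1 + n)⁻¹ * ‖p‖ := by
        rw [abs_neg, abs_of_nonneg (by positivity : (0:ℝ) ≤ ((1+n)^2)⁻¹)]
    _ ≤ (‖p‖ * ‖y - x‖) * (2 * (1 + n)⁻¹) + 1 * ‖p‖ := by
        have t1 : |p (y - x)| * (((1 + n) ^ 2)⁻¹ * ‖N‖) ≤ (‖p‖ * ‖y - x‖) * (2 * (1 + n)⁻¹) :=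
          mul_le_mul hpz e2 (by positivity) (by positivity)
        have t2 : (1 + n)⁻¹ * ‖p‖ ≤ 1 * ‖p‖ :=
          mul_le_mul_of_nonneg_right hinvle (norm_nonneg _)
        linarith
    _ = 2 * ‖p‖ * (‖y - x‖ * (1 + n)⁻¹) + ‖p‖ := by ring
    _ ≤ 2 * ‖p‖ * 1 + ‖p‖ := by
        have := mul_le_mul_of_nonneg_left hfr (by positivity : (0:ℝ) ≤ 2 * ‖p‖)
        linarith
    _ = 3 * ‖p‖ := by ring

lemma mmx_frac_le_one {t : ℝ} (ht : 0 ≤ t) : t * (1 + t)⁻¹ ≤ 1 := by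
  rw [← div_eq_mul_inv, div_le_one (by linarith)]; linarith

lemma mmx_min_le_frac {t : ℝ} (ht : 0 ≤ t) : min 1 t ≤ 2 * (t * (1 + t)⁻¹) := by
  have h1t : (0:ℝ) < 1 + t := by linarith
  have key : 2 * (t * (1 + t)⁻¹) = (2 * t) / (1 + t) := by
    rw [← div_eq_mul_inv]; ring
  rcases le_total t 1 with h | h
  · rw [min_eq_right h, key, le_div_iff₀ h1t]
    nlinarith
  · rw [min_eq_left h, key, le_div_iff₀ h1t]
    nlinarith

lemma mmx_r_le_q (x y : Euc d) : ‖y - x‖ ≤ 1 + ‖y - x‖ ^ (2:ℝ) := by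
  have hn2 : ‖y - x‖ ^ (2:ℝ) = ‖y - x‖ ^ (2:ℕ) := by
    rw [show ((2:ℝ)) = ((2:ℕ):ℝ) by norm_num, Real.rpow_natCast]
  rw [hn2]
  nlinarith [sq_nonneg (‖y - x‖ - 1), norm_nonneg (y - x)]

lemma mmx_phi_spec {ε : ℝ} (hε0 : 0 < ε) (hε1 : ε < 1) (x : Euc d)
    (p : Euc d →L[ℝ] ℝ) (a S : ℝ) (hS : 0 ≤ S) :
    ∃ φ : Euc d → ℝ, IsC1b φ ∧ φ x = a ∧
      (∀ y, a + Set.indicator (ball x 1) (fun z => p (z - x)) y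
            + S * min 1 (‖y - x‖ ^ (1 + ε)) ≤ φ y) ∧
      C1Norm φ ≤ 10 * (|a| + ‖p‖ + S) := by
  have h2 : (1:ℝ) < 2 := one_lt_two
  have hβ : (1:ℝ) < 1 + ε := by linarith
  have hβ2 : (1:ℝ) + ε ≤ 2 := by linarith
  set φ : Euc d → ℝ := fun y =>
    a + p (y - x) * (1 + ‖y - x‖ ^ (2:ℝ))⁻¹
      + ‖p‖ * (‖y - x‖ ^ (2:ℝ) * (1 + ‖y - x‖ ^ (2:ℝ))⁻¹)
      + S * (2 * (‖y - x‖ ^ (1 + ε) * (1 + ‖y - x‖ ^ (1 + ε))⁻¹)) with hφdef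
  have hq0 : ∀ y : Euc d, 0 ≤ ‖y - x‖ ^ (2:ℝ) := fun y => Real.rpow_nonneg (norm_nonneg _) _
  have hs0 : ∀ y : Euc d, 0 ≤ ‖y - x‖ ^ (1 + ε) := fun y => Real.rpow_nonneg (norm_nonneg _) _
  have h1q : ∀ y : Euc d, (0:ℝ) < 1 + ‖y - x‖ ^ (2:ℝ) := fun y => by have := hq0 y; linarith
  have h1s : ∀ y : Euc d, (0:ℝ) < 1 + ‖y - x‖ ^ (1 + ε) := fun y => by have := hs0 y; linarith
  -- pointwise term bounds
  have hA : ∀ y : Euc d, |p (y - x) * (1 + ‖y - x‖ ^ (2:ℝ))⁻¹| ≤ ‖p‖ := by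
    intro y
    rw [abs_mul, abs_of_nonneg (by positivity : (0:ℝ) ≤ (1 + ‖y - x‖ ^ (2:ℝ))⁻¹)]
    have h1 : |p (y - x)| ≤ ‖p‖ * ‖y - x‖ := by
      rw [← Real.norm_eq_abs]; exact p.le_opNorm _
    have h3 : ‖y - x‖ * (1 + ‖y - x‖ ^ (2:ℝ))⁻¹ ≤ 1 := by
      rw [← div_eq_mul_inv, div_le_one (h1q y)]; exact mmx_r_le_q x y
    calc |p (y - x)| * (1 + ‖y - x‖ ^ (2:ℝ))⁻¹
        ≤ (‖p‖ * ‖y - x‖) * (1 + ‖y - x‖ ^ (2:ℝ))⁻¹ :=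
          mul_le_mul_of_nonneg_right h1 (by positivity)
      _ = ‖p‖ * (‖y - x‖ * (1 + ‖y - x‖ ^ (2:ℝ))⁻¹) := by ring
      _ ≤ ‖p‖ * 1 := mul_le_mul_of_nonneg_left h3 (norm_nonneg _)
      _ = ‖p‖ := mul_one _
  have hB : ∀ y : Euc d, |‖p‖ * (‖y - x‖ ^ (2:ℝ) * (1 + ‖y - x‖ ^ (2:ℝ))⁻¹)| ≤ ‖p‖ := by
    intro y
    rw [abs_of_nonneg (by positivity)]
    calc ‖p‖ * (‖y - x‖ ^ (2:ℝ) * (1 + ‖y - x‖ ^ (2:ℝ))⁻¹) ≤ ‖p‖ * 1 :=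
          mul_le_mul_of_nonneg_left (mmx_frac_le_one (hq0 y)) (norm_nonneg _)
      _ = ‖p‖ := mul_one _
  have hC : ∀ y : Euc d, |S * (2 * (‖y - x‖ ^ (1 + ε) * (1 + ‖y - x‖ ^ (1 + ε))⁻¹))| ≤ 2 * S := by
    intro y
    rw [abs_of_nonneg (by positivity)]
    calc S * (2 * (‖y - x‖ ^ (1 + ε) * (1 + ‖y - x‖ ^ (1 + ε))⁻¹)) ≤ S * (2 * 1) := by
          apply mul_le_mul_of_nonneg_left _ hS
          have := mmx_frac_le_one (hs0 y)
          linarith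
      _ = 2 * S := by ring
  have habs : ∀ y, |φ y| ≤ |a| + 2 * ‖p‖ + 2 * S := by
    intro y
    rw [hφdef]
    calc |a + p (y - x) * (1 + ‖y - x‖ ^ (2:ℝ))⁻¹
          + ‖p‖ * (‖y - x‖ ^ (2:ℝ) * (1 + ‖y - x‖ ^ (2:ℝ))⁻¹)
          + S * (2 * (‖y - x‖ ^ (1 + ε) * (1 + ‖y - x‖ ^ (1 + ε))⁻¹))|
        ≤ |a + p (y - x) * (1 + ‖y - x‖ ^ (2:ℝ))⁻¹
          + ‖p‖ * (‖y - x‖ ^ (2:ℝ) * (1 + ‖y - x‖ ^ (2:ℝ))⁻¹)|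
          + |S * (2 * (‖y - x‖ ^ (1 + ε) * (1 + ‖y - x‖ ^ (1 + ε))⁻¹))| := abs_add_le _ _
      _ ≤ |a + p (y - x) * (1 + ‖y - x‖ ^ (2:ℝ))⁻¹|
          + |‖p‖ * (‖y - x‖ ^ (2:ℝ) * (1 + ‖y - x‖ ^ (2:ℝ))⁻¹)|
          + |S * (2 * (‖y - x‖ ^ (1 + ε) * (1 + ‖y - x‖ ^ (1 + ε))⁻¹))| := by
            have := abs_add_le (a + p (y - x) * (1 + ‖y - x‖ ^ (2:ℝ))⁻¹)
              (‖p‖ * (‖y - x‖ ^ (2:ℝ) * (1 + ‖y - x‖ ^ (2:ℝ))⁻¹))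
            linarith
      _ ≤ (|a| + |p (y - x) * (1 + ‖y - x‖ ^ (2:ℝ))⁻¹|)
          + |‖p‖ * (‖y - x‖ ^ (2:ℝ) * (1 + ‖y - x‖ ^ (2:ℝ))⁻¹)|
          + |S * (2 * (‖y - x‖ ^ (1 + ε) * (1 + ‖y - x‖ ^ (1 + ε))⁻¹))| := by
            have := abs_add_le a (p (y - x) * (1 + ‖y - x‖ ^ (2:ℝ))⁻¹)
            linarith
      _ ≤ |a| + 2 * ‖p‖ + 2 * S := by
            have := hA y; have := hB y; have := hC y; linarith
  have hgradpt : ∀ y, ‖fderiv ℝ φ y‖ ≤ 7 * ‖p‖ + 8 * S := by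
    intro y
    obtain ⟨D₁, hD₁, hD₁b⟩ := mmx_piece_lin x p y
    obtain ⟨D₂, hD₂, hD₂b⟩ := mmx_piece x h2 le_rfl y
    obtain ⟨D₃, hD₃, hD₃b⟩ := mmx_piece x hβ hβ2 y
    have hder : HasFDerivAt φ (D₁ + ‖p‖ • D₂ + S • ((2:ℝ) • D₃)) y :=
      ((hD₁.const_add a).add (hD₂.const_mul ‖p‖)).add ((hD₃.const_mul 2).const_mul S)
    rw [hder.fderiv]
    calc ‖D₁ + ‖p‖ • D₂ + S • ((2:ℝ) • D₃)‖
        ≤ ‖D₁ + ‖p‖ • D₂‖ + ‖S • ((2:ℝ) • D₃)‖ := norm_add_le _ _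
      _ ≤ ‖D₁‖ + ‖‖p‖ • D₂‖ + ‖S • ((2:ℝ) • D₃)‖ := by
            have := norm_add_le D₁ (‖p‖ • D₂); linarith
      _ = ‖D₁‖ + ‖p‖ * ‖D₂‖ + S * (2 * ‖D₃‖) := by
            rw [mmx_norm_smul, mmx_norm_smul, mmx_norm_smul, abs_of_nonneg (norm_nonneg p),
              abs_of_nonneg hS, abs_of_nonneg (by norm_num : (0:ℝ) ≤ 2)]
      _ ≤ 3 * ‖p‖ + ‖p‖ * 4 + S * (2 * 4) := by
            have h1 : ‖p‖ * ‖D₂‖ ≤ ‖p‖ * 4 := mul_le_mul_of_nonneg_left hD₂b (norm_nonneg _)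
            have h2' : 2 * ‖D₃‖ ≤ 2 * 4 := by linarith
            have h3 : S * (2 * ‖D₃‖) ≤ S * (2 * 4) := mul_le_mul_of_nonneg_left h2' hS
            linarith
      _ ≤ 7 * ‖p‖ + 8 * S := by linarith
  have hcd : ContDiff ℝ 1 φ := by
    rw [hφdef]
    have hq : ContDiff ℝ 1 (fun y : Euc d => ‖y - x‖ ^ (2:ℝ)) :=
      (contDiff_id.sub contDiff_const).norm_rpow h2
    have hs : ContDiff ℝ 1 (fun y : Euc d => ‖y - x‖ ^ (1 + ε)) :=
      (contDiff_id.sub contDiff_const).norm_rpow hβ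
    have hlin : ContDiff ℝ 1 (fun y : Euc d => p (y - x)) :=
      p.contDiff.comp (contDiff_id.sub contDiff_const)
    have hiq : ContDiff ℝ 1 (fun y : Euc d => (1 + ‖y - x‖ ^ (2:ℝ))⁻¹) :=
      (contDiff_const.add hq).inv fun y => (h1q y).ne'
    have his : ContDiff ℝ 1 (fun y : Euc d => (1 + ‖y - x‖ ^ (1 + ε))⁻¹) :=
      (contDiff_const.add hs).inv fun y => (h1s y).ne'
    exact ((contDiff_const.add (hlin.mul hiq)).add
      (contDiff_const.mul (hq.mul hiq))).add
      (contDiff_const.mul (contDiff_const.mul (hs.mul his)))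
  refine ⟨φ, ⟨hcd, |a| + 2 * ‖p‖ + 2 * S + (7 * ‖p‖ + 8 * S), fun y => ⟨?_, ?_⟩⟩, ?_, ?_, ?_⟩
  · have := habs y
    have h0 : (0:ℝ) ≤ 7 * ‖p‖ + 8 * S := by positivity
    linarith
  · have := hgradpt y
    have h0 : (0:ℝ) ≤ |a| + 2 * ‖p‖ + 2 * S := by positivity
    linarith
  · -- φ x = a
    rw [hφdef]
    simp only [sub_self, norm_zero, map_zero]
    rw [Real.zero_rpow (by norm_num : (2:ℝ) ≠ 0),
      Real.zero_rpow (by positivity : (1:ℝ) + ε ≠ 0)]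
    ring
  · -- majorization
    intro y
    have hmin : S * min 1 (‖y - x‖ ^ (1 + ε))
        ≤ S * (2 * (‖y - x‖ ^ (1 + ε) * (1 + ‖y - x‖ ^ (1 + ε))⁻¹)) :=
      mul_le_mul_of_nonneg_left (mmx_min_le_frac (hs0 y)) hS
    have hind : Set.indicator (ball x 1) (fun z => p (z - x)) y
        ≤ p (y - x) * (1 + ‖y - x‖ ^ (2:ℝ))⁻¹
          + ‖p‖ * (‖y - x‖ ^ (2:ℝ) * (1 + ‖y - x‖ ^ (2:ℝ))⁻¹) := by
      have heq : p (y - x) * (1 + ‖y - x‖ ^ (2:ℝ))⁻¹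
          + ‖p‖ * (‖y - x‖ ^ (2:ℝ) * (1 + ‖y - x‖ ^ (2:ℝ))⁻¹)
          = (p (y - x) + ‖p‖ * ‖y - x‖ ^ (2:ℝ)) / (1 + ‖y - x‖ ^ (2:ℝ)) := by
        field_simp
        try ring
      by_cases hy : y ∈ ball x 1
      · rw [indicator_of_mem hy, heq, le_div_iff₀ (h1q y)]
        have hz1 : ‖y - x‖ < 1 := by rwa [mem_ball, dist_eq_norm] at hy
        have hpz : p (y - x) ≤ ‖p‖ := by
          have h1 : |p (y - x)| ≤ ‖p‖ * ‖y - x‖ := by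
            rw [← Real.norm_eq_abs]; exact p.le_opNorm _
          have h2' : ‖p‖ * ‖y - x‖ ≤ ‖p‖ * 1 :=
            mul_le_mul_of_nonneg_left hz1.le (norm_nonneg _)
          calc p (y - x) ≤ |p (y - x)| := le_abs_self _
            _ ≤ ‖p‖ * 1 := h1.trans h2'
            _ = ‖p‖ := mul_one _
        nlinarith [mul_le_mul_of_nonneg_right hpz (hq0 y)]
      · rw [indicator_of_notMem hy, heq]
        apply div_nonneg _ (h1q y).le
        simp only [mem_ball, dist_eq_norm, not_lt] at hy
        have hz2 : ‖y - x‖ ≤ ‖y - x‖ ^ (2:ℝ) := by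
          have hn2 : ‖y - x‖ ^ (2:ℝ) = ‖y - x‖ ^ (2:ℕ) := by
            rw [show ((2:ℝ)) = ((2:ℕ):ℝ) by norm_num, Real.rpow_natCast]
          rw [hn2]; nlinarith
        have h1 : |p (y - x)| ≤ ‖p‖ * ‖y - x‖ := by
          rw [← Real.norm_eq_abs]; exact p.le_opNorm _
        have h2' : ‖p‖ * ‖y - x‖ ≤ ‖p‖ * ‖y - x‖ ^ (2:ℝ) :=
          mul_le_mul_of_nonneg_left hz2 (norm_nonneg _)
        have h3 : -(‖p‖ * ‖y - x‖ ^ (2:ℝ)) ≤ p (y - x) := by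
          have := neg_abs_le (p (y - x))
          linarith
        linarith
    rw [hφdef]
    dsimp only
    linarith [hmin, hind]
  · -- C1Norm bound
    have hsup : supNorm φ ≤ |a| + 2 * ‖p‖ + 2 * S := ciSup_le habs
    have hgrad : gradSup φ ≤ 7 * ‖p‖ + 8 * S := ciSup_le hgradpt
    have h1 : C1Norm φ = supNorm φ + gradSup φ := rfl
    rw [h1]
    have := norm_nonneg p
    have := abs_nonneg a
    linarith

/-- second-order increment of `w` at `x` -/
def mmxD (w : Euc d → ℝ) (x y : Euc d) : ℝ :=
  w y - w x - Set.indicator (ball x 1) (fun z => fderiv ℝ w x (z - x)) y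

def mmxRho (ε : ℝ) (x y : Euc d) : ℝ := min 1 (‖y - x‖ ^ (1 + ε))

def mmxS (ε : ℝ) (w : Euc d → ℝ) (x : Euc d) : ℝ := ⨆ y, mmxD w x y / mmxRho ε x y

lemma mmx_apply_eq (L : Levy1Data d) (w : Euc d → ℝ) :
    L.apply w = fderiv ℝ w L.base L.B + L.C * w L.base + ∫ y, mmxD w L.base y ∂L.μ := rfl

lemma mmxRho_nonneg (ε : ℝ) (x y : Euc d) : 0 ≤ mmxRho ε x y :=
  le_min zero_le_one (Real.rpow_nonneg (norm_nonneg _) _)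

lemma mmxRho_self {ε : ℝ} (hβ0 : 0 < 1 + ε) (x : Euc d) : mmxRho ε x x = 0 := by
  unfold mmxRho
  rw [sub_self, norm_zero, Real.zero_rpow hβ0.ne']
  simp

lemma mmxRho_pos {ε : ℝ} (hβ0 : 0 < 1 + ε) (x : Euc d) {y : Euc d} (hyx : y ≠ x) :
    0 < mmxRho ε x y := by
  apply lt_min one_pos
  apply Real.rpow_pos_of_pos
  rw [norm_pos_iff, sub_ne_zero]
  exact hyx

lemma mmxD_self (w : Euc d → ℝ) (x : Euc d) : mmxD w x x = 0 := by
  unfold mmxD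
  rw [indicator_of_mem (mem_ball_self one_pos)]
  simp

lemma mmxD_ball {ε : ℝ} (hε0 : 0 < ε) {w : Euc d → ℝ} (hw : ContDiff ℝ 1 w)
    {M₁ : ℝ} (hM₁0 : 0 ≤ M₁)
    (hM₁ : ∀ y z, ‖fderiv ℝ w y - fderiv ℝ w z‖ ≤ M₁ * ‖y - z‖ ^ ε)
    {x y : Euc d} (hy : y ∈ ball x 1) : |mmxD w x y| ≤ M₁ * ‖y - x‖ ^ (1 + ε) := by
  by_cases hyx : y = x
  · subst hyx
    rw [mmxD_self, sub_self, norm_zero, Real.zero_rpow (by linarith : (1:ℝ) + ε ≠ 0)]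
    simp
  · have hne : ‖y - x‖ ≠ 0 := by
      rw [norm_ne_zero_iff, sub_ne_zero]; exact hyx
    have hgd : ∀ z : Euc d, DifferentiableAt ℝ (fun ξ => w ξ - fderiv ℝ w x (ξ - x)) z :=
      fun z => ((hw.differentiable one_ne_zero) z).sub (mmx_lin (fderiv ℝ w x) x z).differentiableAt
    have hgfd : ∀ z : Euc d, fderiv ℝ (fun ξ => w ξ - fderiv ℝ w x (ξ - x)) z
        = fderiv ℝ w z - fderiv ℝ w x := by
      intro z
      rw [fderiv_fun_sub ((hw.differentiable one_ne_zero) z) (mmx_lin (fderiv ℝ w x) x z).differentiableAt,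
        (mmx_lin (fderiv ℝ w x) x z).fderiv]
    have hmvt : ‖(w y - fderiv ℝ w x (y - x)) - (w x - fderiv ℝ w x (x - x))‖
        ≤ (M₁ * ‖y - x‖ ^ ε) * ‖y - x‖ := by
      apply Convex.norm_image_sub_le_of_norm_fderiv_le (fun z _ => hgd z) ?_
        (convex_closedBall x ‖y - x‖) (mem_closedBall_self (norm_nonneg _)) ?_
      · intro z hz
        rw [hgfd z]
        have h1 : ‖z - x‖ ≤ ‖y - x‖ := by rwa [mem_closedBall, dist_eq_norm] at hz
        calc ‖fderiv ℝ w z - fderiv ℝ w x‖ ≤ M₁ * ‖z - x‖ ^ ε := hM₁ z x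
          _ ≤ M₁ * ‖y - x‖ ^ ε :=
              mul_le_mul_of_nonneg_left (Real.rpow_le_rpow (norm_nonneg _) h1 hε0.le) hM₁0
      · rw [mem_closedBall, dist_eq_norm]
    have hgD : (w y - fderiv ℝ w x (y - x)) - (w x - fderiv ℝ w x (x - x)) = mmxD w x y := by
      unfold mmxD
      rw [indicator_of_mem hy, sub_self, map_zero]
      ring
    rw [← hgD, ← Real.norm_eq_abs]
    calc ‖(w y - fderiv ℝ w x (y - x)) - (w x - fderiv ℝ w x (x - x))‖
        ≤ (M₁ * ‖y - x‖ ^ ε) * ‖y - x‖ := hmvt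
      _ = M₁ * ‖y - x‖ ^ (1 + ε) := by
          rw [mul_assoc, ← Real.rpow_add_one hne ε, add_comm ε 1]

lemma mmxQ_bdd {ε : ℝ} (hε0 : 0 < ε) (hε1 : ε < 1) {w : Euc d → ℝ} (hw : ContDiff ℝ 1 w)
    {M₀ : ℝ} (hM₀ : ∀ y, |w y| ≤ M₀)
    {M₁ : ℝ} (hM₁0 : 0 ≤ M₁)
    (hM₁ : ∀ y z, ‖fderiv ℝ w y - fderiv ℝ w z‖ ≤ M₁ * ‖y - z‖ ^ ε) (x : Euc d) :
    ∀ y, mmxD w x y / mmxRho ε x y ≤ M₁ + 2 * M₀ := by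
  have hβ0 : (0:ℝ) < 1 + ε := by linarith
  have hM₀0 : 0 ≤ M₀ := le_trans (abs_nonneg _) (hM₀ x)
  intro y
  by_cases hyx : y = x
  · subst hyx
    rw [mmxD_self, zero_div]
    positivity
  · by_cases hy : y ∈ ball x 1
    · have hz1 : ‖y - x‖ < 1 := by rwa [mem_ball, dist_eq_norm] at hy
      have hρeq : mmxRho ε x y = ‖y - x‖ ^ (1 + ε) :=
        min_eq_right (Real.rpow_le_one (norm_nonneg _) hz1.le hβ0.le)
      have hρpos : (0:ℝ) < ‖y - x‖ ^ (1 + ε) := by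
        apply Real.rpow_pos_of_pos
        rw [norm_pos_iff, sub_ne_zero]; exact hyx
      rw [hρeq, div_le_iff₀ hρpos]
      have h1 := mmxD_ball hε0 hw hM₁0 hM₁ hy
      have h2 : (0:ℝ) ≤ ‖y - x‖ ^ (1 + ε) := hρpos.le
      have h3 := abs_le.mp h1
      nlinarith
    · have hz1 : 1 ≤ ‖y - x‖ := by
        simpa [mem_ball, dist_eq_norm, not_lt] using hy
      have hρeq : mmxRho ε x y = 1 :=
        min_eq_left (Real.one_le_rpow hz1 hβ0.le)
      rw [hρeq, div_one]
      unfold mmxD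
      rw [indicator_of_notMem hy, sub_zero]
      have h1 := abs_le.mp (hM₀ y)
      have h2 := abs_le.mp (hM₀ x)
      linarith

lemma mmxS_nonneg {ε : ℝ} (x : Euc d) {w : Euc d → ℝ}
    (hbdd : BddAbove (Set.range fun y => mmxD w x y / mmxRho ε x y)) :
    0 ≤ mmxS ε w x := by
  have h := le_ciSup hbdd x
  rw [mmxD_self, zero_div] at h
  exact h

lemma mmxD_le {ε : ℝ} (hβ0 : 0 < 1 + ε) (x : Euc d) {w : Euc d → ℝ}
    (hbdd : BddAbove (Set.range fun y => mmxD w x y / mmxRho ε x y)) (y : Euc d) :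
    mmxD w x y ≤ mmxS ε w x * mmxRho ε x y := by
  by_cases hyx : y = x
  · subst hyx
    rw [mmxD_self, mmxRho_self hβ0, mul_zero]
  · have h := le_ciSup hbdd y
    rw [div_le_iff₀ (mmxRho_pos hβ0 x hyx)] at h
    exact h

lemma mmx_riesz_norm (p : Euc d →L[ℝ] ℝ) (Λ : ℝ) (hΛ : 0 ≤ Λ) :
    ‖(Λ / ‖p‖) • ((InnerProductSpace.toDual ℝ (Euc d)).symm p)‖ ≤ Λ := by
  rcases eq_or_ne p 0 with h0 | h0
  · simp [h0, hΛ]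
  · have hpn : (0:ℝ) < ‖p‖ := norm_pos_iff.mpr h0
    rw [show ‖(Λ / ‖p‖) • ((InnerProductSpace.toDual ℝ (Euc d)).symm p)‖
        = ‖Λ / ‖p‖‖ * ‖(InnerProductSpace.toDual ℝ (Euc d)).symm p‖ from norm_smul _ _,
      LinearIsometryEquiv.norm_map, Real.norm_eq_abs, abs_of_nonneg (by positivity),
      div_mul_cancel₀ _ hpn.ne']

lemma mmx_riesz_apply (p : Euc d →L[ℝ] ℝ) (Λ : ℝ) :
    p ((Λ / ‖p‖) • ((InnerProductSpace.toDual ℝ (Euc d)).symm p)) = Λ * ‖p‖ := by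
  rcases eq_or_ne p 0 with h0 | h0
  · simp [h0]
  · have hpn : (0:ℝ) < ‖p‖ := norm_pos_iff.mpr h0
    rw [ContinuousLinearMap.map_smul, smul_eq_mul]
    have h1 : p ((InnerProductSpace.toDual ℝ (Euc d)).symm p) = ‖p‖ ^ 2 := by
      have h := InnerProductSpace.toDual_symm_apply (𝕜 := ℝ) (E := Euc d) (y := p)
        (x := (InnerProductSpace.toDual ℝ (Euc d)).symm p)
      rw [← h, real_inner_self_eq_norm_sq, LinearIsometryEquiv.norm_map]
    rw [h1]
    field_simp

lemma mmx_apply_zero (L : Levy1Data d) (u : Euc d → ℝ) :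
    L.apply (fun y => u y - u y) = 0 := by
  have h0 : (fun y => u y - u y) = (fun _ : Euc d => (0:ℝ)) := by funext y; ring
  rw [h0]
  unfold Levy1Data.apply
  simp

lemma mmx_dirac_integral (w : Euc d → ℝ) (x y₀ : Euc d) {t : ℝ} (ht : 0 ≤ t) :
    ∫ y, mmxD w x y ∂(ENNReal.ofReal t • Measure.dirac y₀) = t * mmxD w x y₀ := by
  rw [integral_smul_measure, integral_dirac, ENNReal.toReal_ofReal ht, smul_eq_mul]

lemma mmx_sub_holder {ε : ℝ} (u v : Euc d → ℝ) (hu : IsC1Holder ε u) (hv : IsC1Holder ε v) :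
    IsC1Holder ε (fun y => u y - v y) := by
  obtain ⟨⟨hu1, Mu, hMu⟩, M₁u, hM₁u⟩ := hu
  obtain ⟨⟨hv1, Mv, hMv⟩, M₁v, hM₁v⟩ := hv
  have hfd : ∀ y, fderiv ℝ (fun y => u y - v y) y = fderiv ℝ u y - fderiv ℝ v y :=
    fun y => fderiv_fun_sub (hu1.differentiable one_ne_zero y) (hv1.differentiable one_ne_zero y)
  refine ⟨⟨hu1.sub hv1, Mu + Mv, fun y => ⟨?_, ?_⟩⟩, M₁u + M₁v, fun y z => ?_⟩
  · calc |u y - v y| ≤ |u y| + |v y| := abs_sub _ _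
      _ ≤ Mu + Mv := add_le_add (hMu y).1 (hMv y).1
  · rw [hfd y]
    calc ‖fderiv ℝ u y - fderiv ℝ v y‖ ≤ ‖fderiv ℝ u y‖ + ‖fderiv ℝ v y‖ := norm_sub_le _ _
      _ ≤ Mu + Mv := add_le_add (hMu y).2 (hMv y).2
  · rw [hfd y, hfd z]
    have heq : fderiv ℝ u y - fderiv ℝ v y - (fderiv ℝ u z - fderiv ℝ v z)
        = (fderiv ℝ u y - fderiv ℝ u z) - (fderiv ℝ v y - fderiv ℝ v z) := by
      abel
    rw [heq]
    calc ‖(fderiv ℝ u y - fderiv ℝ u z) - (fderiv ℝ v y - fderiv ℝ v z)‖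
        ≤ ‖fderiv ℝ u y - fderiv ℝ u z‖ + ‖fderiv ℝ v y - fderiv ℝ v z‖ := norm_sub_le _ _
      _ ≤ M₁u * ‖y - z‖ ^ ε + M₁v * ‖y - z‖ ^ ε := add_le_add (hM₁u y z) (hM₁v y z)
      _ = (M₁u + M₁v) * ‖y - z‖ ^ ε := by ring

lemma mmx_add_c1b (v φ : Euc d → ℝ) (hv : IsC1b v) (hφ : IsC1b φ) :
    IsC1b (fun y => v y + φ y) := by
  obtain ⟨hv1, Mv, hMv⟩ := hv
  obtain ⟨hφ1, Mφ, hMφ⟩ := hφ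
  have hfd : ∀ y, fderiv ℝ (fun y => v y + φ y) y = fderiv ℝ v y + fderiv ℝ φ y :=
    fun y => fderiv_fun_add (hv1.differentiable one_ne_zero y) (hφ1.differentiable one_ne_zero y)
  refine ⟨hv1.add hφ1, Mv + Mφ, fun y => ⟨?_, ?_⟩⟩
  · calc |v y + φ y| ≤ |v y| + |φ y| := abs_add_le _ _
      _ ≤ Mv + Mφ := add_le_add (hMv y).1 (hMφ y).1
  · rw [hfd y]
    calc ‖fderiv ℝ v y + fderiv ℝ φ y‖ ≤ ‖fderiv ℝ v y‖ + ‖fderiv ℝ φ y‖ := norm_add_le _ _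
      _ ≤ Mv + Mφ := add_le_add (hMv y).2 (hMφ y).2


/-- min-max formula for Lipschitz operators `I : C¹_b(ℝ^d) → C_b(ℝ^d)`
with the GCP and the locality assumption: the linear functionals have no second-order
diffusion part, and the formula holds for `u, v ∈ C^{1,ε}_b(ℝ^d)`. -/
theorem minmax_C1b (d : ℕ) (hd : 1 ≤ d) (K₀ : ℝ) (hK₀ : 0 ≤ K₀)
    (ε : ℝ) (hε : ε ∈ Set.Ioo (0 : ℝ) 1) :
    ∃ Λ : ℝ, 0 < Λ ∧
      ∀ I : (Euc d → ℝ) → Euc d → ℝ,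
        (∀ u, IsC1b u → IsCb (I u)) →
        LipWith K₀ IsC1b C1Norm I →
        GCP IsC1b I →
        Locality IsC1b localC1Norm I →
        ∃ 𝒦 : Set (Levy1Data d),
          (∀ L ∈ 𝒦, Levy1Bounds Λ ε L) ∧
          (∀ u v, IsC1Holder ε u → IsC1Holder ε v → ∀ x : Euc d,
            ∃ L ∈ 𝒦, L.base = x ∧ I u x ≤ I v x + L.apply (fun y => u y - v y)) ∧
          (∀ u, IsC1Holder ε u → ∀ x : Euc d,
            I u x = sInf {r : ℝ | ∃ v, IsC1Holder ε v ∧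
                r = sSup {s : ℝ | ∃ L ∈ 𝒦, L.base = x ∧
                      s = I v x + L.apply (fun y => u y - v y)}} ∧
            sSup {s : ℝ | ∃ L ∈ 𝒦, L.base = x ∧
                s = I u x + L.apply (fun y => u y - u y)} = I u x) := by
  obtain ⟨hε0, hε1⟩ := hε
  have hβ0 : (0:ℝ) < 1 + ε := by linarith
  refine ⟨20 * K₀ + 1, by linarith, ?_⟩
  intro I hIb hLip hGCP hLoc
  clear hIb hLoc
  set 𝒦 : Set (Levy1Data d) :=
    {L : Levy1Data d | ‖L.B‖ ≤ 20 * K₀ + 1 ∧ |L.C| ≤ 20 * K₀ + 1 ∧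
      (L.μ = 0 ∨ ∃ (y₀ : Euc d) (t : ℝ), y₀ ≠ L.base ∧ 0 ≤ t ∧
        t * min 1 (‖y₀ - L.base‖ ^ (1 + ε)) ≤ 20 * K₀ + 1 ∧
        L.μ = ENNReal.ofReal t • Measure.dirac y₀)} with h𝒦
  have hmem𝒦 : ∀ L : Levy1Data d, L ∈ 𝒦 ↔ (‖L.B‖ ≤ 20 * K₀ + 1 ∧ |L.C| ≤ 20 * K₀ + 1 ∧
      (L.μ = 0 ∨ ∃ (y₀ : Euc d) (t : ℝ), y₀ ≠ L.base ∧ 0 ≤ t ∧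
        t * min 1 (‖y₀ - L.base‖ ^ (1 + ε)) ≤ 20 * K₀ + 1 ∧
        L.μ = ENNReal.ofReal t • Measure.dirac y₀)) := by
    intro L
    rw [h𝒦]
    exact Iff.rfl
  -- the main construction
  have main : ∀ w : Euc d → ℝ, IsC1Holder ε w → ∀ x : Euc d,
      (∃ L ∈ 𝒦, L.base = x ∧ ∃ φ : Euc d → ℝ, IsC1b φ ∧ (∀ y, w y ≤ φ y) ∧ φ x = w x ∧
          K₀ * C1Norm φ ≤ L.apply w) ∧
      (∃ Cb : ℝ, ∀ L ∈ 𝒦, L.base = x → L.apply w ≤ Cb) := by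
    intro w hw x
    obtain ⟨⟨hw1, M₀, hM₀⟩, M₁', hM₁'⟩ := hw
    have hM₀1 : ∀ y, |w y| ≤ M₀ := fun y => (hM₀ y).1
    have hM₁0 : (0:ℝ) ≤ max M₁' 0 := le_max_right _ _
    have hM₁ : ∀ y z, ‖fderiv ℝ w y - fderiv ℝ w z‖ ≤ (max M₁' 0) * ‖y - z‖ ^ ε :=
      fun y z => (hM₁' y z).trans
        (mul_le_mul_of_nonneg_right (le_max_left _ _) (Real.rpow_nonneg (norm_nonneg _) _))
    have hQbd := mmxQ_bdd hε0 hε1 hw1 hM₀1 hM₁0 hM₁ x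
    have hbdd : BddAbove (Set.range fun y => mmxD w x y / mmxRho ε x y) :=
      ⟨max M₁' 0 + 2 * M₀, by rintro r ⟨y, rfl⟩; exact hQbd y⟩
    have hS0 : 0 ≤ mmxS ε w x := mmxS_nonneg x hbdd
    have hDle : ∀ y, mmxD w x y ≤ mmxS ε w x * mmxRho ε x y := mmxD_le hβ0 x hbdd
    obtain ⟨φ, hφ1, hφ2, hφ3, hφ4⟩ :=
      mmx_phi_spec hε0 hε1 x (fderiv ℝ w x) (w x) (mmxS ε w x) hS0
    have hwφ : ∀ y, w y ≤ φ y := by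
      intro y
      have h1 : w y - w x - Set.indicator (ball x 1) (fun z => fderiv ℝ w x (z - x)) y
          ≤ mmxS ε w x * min 1 (‖y - x‖ ^ (1 + ε)) := hDle y
      have h2 := hφ3 y
      linarith
    constructor
    · by_cases hSpos : 0 < mmxS ε w x
      · have hS' : mmxS ε w x / 2 < ⨆ y, mmxD w x y / mmxRho ε x y := by
          rw [show (⨆ y, mmxD w x y / mmxRho ε x y) = mmxS ε w x from rfl]
          linarith
        obtain ⟨y₀, hy₀⟩ := exists_lt_of_lt_ciSup hS'
        have hy₀x : y₀ ≠ x := by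
          intro h
          rw [h, mmxD_self, zero_div] at hy₀
          linarith
        have hρpos := mmxRho_pos hβ0 x hy₀x
        have ht0 : (0:ℝ) ≤ (20 * K₀ + 1) / mmxRho ε x y₀ := by positivity
        refine ⟨⟨x, ((20 * K₀ + 1) / ‖fderiv ℝ w x‖) •
            ((InnerProductSpace.toDual ℝ (Euc d)).symm (fderiv ℝ w x)),
            (if 0 ≤ w x then 20 * K₀ + 1 else -(20 * K₀ + 1)),
            ENNReal.ofReal ((20 * K₀ + 1) / mmxRho ε x y₀) • Measure.dirac y₀⟩,
          ?_, rfl, φ, hφ1, hwφ, hφ2, ?_⟩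
        · rw [hmem𝒦]
          refine ⟨mmx_riesz_norm _ _ (by linarith), ?_,
            Or.inr ⟨y₀, (20 * K₀ + 1) / mmxRho ε x y₀, hy₀x, ht0, ?_, rfl⟩⟩
          · show |if 0 ≤ w x then 20 * K₀ + 1 else -(20 * K₀ + 1)| ≤ 20 * K₀ + 1
            split_ifs with h
            · rw [abs_of_nonneg (by linarith)]
            · rw [abs_neg, abs_of_nonneg (by linarith)]
          · show ((20 * K₀ + 1) / mmxRho ε x y₀) * mmxRho ε x y₀ ≤ 20 * K₀ + 1
            rw [div_mul_cancel₀ _ hρpos.ne']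
        · rw [mmx_apply_eq]
          dsimp only
          rw [mmx_riesz_apply (fderiv ℝ w x) (20 * K₀ + 1),
            mmx_dirac_integral w x y₀ ht0]
          have hC : (if 0 ≤ w x then 20 * K₀ + 1 else -(20 * K₀ + 1)) * w x
              = (20 * K₀ + 1) * |w x| := by
            split_ifs with h
            · rw [abs_of_nonneg h]
            · rw [abs_of_neg (not_le.mp h)]; ring
          rw [hC]
          rw [lt_div_iff₀ hρpos] at hy₀
          have ht1 : (20 * K₀ + 1) * (mmxS ε w x / 2)
              ≤ ((20 * K₀ + 1) / mmxRho ε x y₀) * mmxD w x y₀ := by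
            calc (20 * K₀ + 1) * (mmxS ε w x / 2)
                = ((20 * K₀ + 1) / mmxRho ε x y₀) * (mmxS ε w x / 2 * mmxRho ε x y₀) := by
                  field_simp
              _ ≤ ((20 * K₀ + 1) / mmxRho ε x y₀) * mmxD w x y₀ :=
                  mul_le_mul_of_nonneg_left hy₀.le ht0
          have h6 := mul_le_mul_of_nonneg_left hφ4 hK₀
          have h7 : (0:ℝ) ≤ ‖fderiv ℝ w x‖ := norm_nonneg _
          have h8 : (0:ℝ) ≤ |w x| := abs_nonneg _
          nlinarith
      · have hSeq : mmxS ε w x = 0 := le_antisymm (not_lt.mp hSpos) hS0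
        refine ⟨⟨x, ((20 * K₀ + 1) / ‖fderiv ℝ w x‖) •
            ((InnerProductSpace.toDual ℝ (Euc d)).symm (fderiv ℝ w x)),
            (if 0 ≤ w x then 20 * K₀ + 1 else -(20 * K₀ + 1)), (0 : Measure (Euc d))⟩,
          ?_, rfl, φ, hφ1, hwφ, hφ2, ?_⟩
        · rw [hmem𝒦]
          refine ⟨mmx_riesz_norm _ _ (by linarith), ?_, Or.inl rfl⟩
          show |if 0 ≤ w x then 20 * K₀ + 1 else -(20 * K₀ + 1)| ≤ 20 * K₀ + 1
          split_ifs with h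
          · rw [abs_of_nonneg (by linarith)]
          · rw [abs_neg, abs_of_nonneg (by linarith)]
        · rw [mmx_apply_eq]
          dsimp only
          rw [mmx_riesz_apply (fderiv ℝ w x) (20 * K₀ + 1), integral_zero_measure]
          have hC : (if 0 ≤ w x then 20 * K₀ + 1 else -(20 * K₀ + 1)) * w x
              = (20 * K₀ + 1) * |w x| := by
            split_ifs with h
            · rw [abs_of_nonneg h]
            · rw [abs_of_neg (not_le.mp h)]; ring
          rw [hC, hSeq] at *
          have h6 := mul_le_mul_of_nonneg_left hφ4 hK₀
          have h7 : (0:ℝ) ≤ ‖fderiv ℝ w x‖ := norm_nonneg _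
          have h8 : (0:ℝ) ≤ |w x| := abs_nonneg _
          nlinarith
    · refine ⟨(20 * K₀ + 1) * (‖fderiv ℝ w x‖ + |w x| + mmxS ε w x), ?_⟩
      intro L hL hbase
      rw [hmem𝒦] at hL
      obtain ⟨hB, hC, hμ⟩ := hL
      rw [mmx_apply_eq, hbase]
      have h1 : fderiv ℝ w x L.B ≤ ‖fderiv ℝ w x‖ * (20 * K₀ + 1) := by
        calc fderiv ℝ w x L.B ≤ |fderiv ℝ w x L.B| := le_abs_self _
          _ ≤ ‖fderiv ℝ w x‖ * ‖L.B‖ := by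
              rw [← Real.norm_eq_abs]
              exact (fderiv ℝ w x).le_opNorm _
          _ ≤ ‖fderiv ℝ w x‖ * (20 * K₀ + 1) :=
              mul_le_mul_of_nonneg_left hB (norm_nonneg _)
      have h2 : L.C * w x ≤ (20 * K₀ + 1) * |w x| := by
        calc L.C * w x ≤ |L.C * w x| := le_abs_self _
          _ = |L.C| * |w x| := abs_mul _ _
          _ ≤ (20 * K₀ + 1) * |w x| := mul_le_mul_of_nonneg_right hC (abs_nonneg _)
      have h3 : (∫ y, mmxD w x y ∂L.μ) ≤ (20 * K₀ + 1) * mmxS ε w x := by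
        rcases hμ with h0 | ⟨y₀, t, hne, ht, htρ, hμeq⟩
        · rw [h0, integral_zero_measure]
          positivity
        · rw [hbase] at htρ
          rw [hμeq, mmx_dirac_integral w x y₀ ht]
          have hDy := hDle y₀
          have htρ' : t * mmxRho ε x y₀ ≤ 20 * K₀ + 1 := htρ
          calc t * mmxD w x y₀ ≤ t * (mmxS ε w x * mmxRho ε x y₀) :=
                mul_le_mul_of_nonneg_left hDy ht
            _ = (t * mmxRho ε x y₀) * mmxS ε w x := by ring
            _ ≤ (20 * K₀ + 1) * mmxS ε w x := mul_le_mul_of_nonneg_right htρ' hS0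
      linarith
  -- part (ii) : the key inequality
  have keyI : ∀ u v, IsC1Holder ε u → IsC1Holder ε v → ∀ x : Euc d,
      ∃ L ∈ 𝒦, L.base = x ∧ I u x ≤ I v x + L.apply (fun y => u y - v y) := by
    intro u v hu hv x
    obtain ⟨⟨L, hL, hLb, φ, hφ1, hφ2, hφ3, hφ4⟩, -⟩ :=
      main (fun y => u y - v y) (mmx_sub_holder u v hu hv) x
    refine ⟨L, hL, hLb, ?_⟩
    have hvφ : IsC1b (fun y => v y + φ y) := mmx_add_c1b v φ hv.1 hφ1
    have h1 : I u x ≤ I (fun y => v y + φ y) x := by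
      apply hGCP u _ hu.1 hvφ
      · intro y
        have h : u y - v y ≤ φ y := hφ2 y
        linarith
      · have h : φ x = u x - v x := hφ3
        linarith
    have h2 := hLip (fun y => v y + φ y) v hvφ hv.1 x
    have heqf : (fun y => (fun y => v y + φ y) y - v y) = φ := by
      funext y
      show v y + φ y - v y = φ y
      ring
    rw [heqf] at h2
    have h3 : I (fun y => v y + φ y) x - I v x ≤ K₀ * C1Norm φ :=
      (le_abs_self _).trans h2
    linarith [hφ4]
  -- Levy bounds
  have hbounds : ∀ L ∈ 𝒦, Levy1Bounds (20 * K₀ + 1) ε L := by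
    intro L hL
    rw [hmem𝒦] at hL
    obtain ⟨hB, hC, hμ⟩ := hL
    refine ⟨hB, hC, ?_, ?_⟩
    · rcases hμ with h0 | ⟨y₀, t, hne, ht, htρ, hμeq⟩
      · rw [h0]; simp
      · rw [hμeq, Measure.smul_apply,
          Measure.dirac_apply' _ (measurableSet_singleton _),
          indicator_of_notMem (by simpa using hne)]
        simp
    · rcases hμ with h0 | ⟨y₀, t, hne, ht, htρ, hμeq⟩
      · rw [h0]
        simp
      · rw [hμeq, lintegral_smul_measure, lintegral_dirac, smul_eq_mul, ← ENNReal.ofReal_mul ht]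
        exact ENNReal.ofReal_le_ofReal htρ
  refine ⟨𝒦, hbounds, keyI, ?_⟩
  -- part (iii)
  intro u hu x
  have htrivmem : (⟨x, 0, 0, 0⟩ : Levy1Data d) ∈ 𝒦 := by
    rw [hmem𝒦]
    refine ⟨?_, ?_, Or.inl rfl⟩
    · show ‖(0 : Euc d)‖ ≤ 20 * K₀ + 1
      rw [norm_zero]; linarith
    · show |(0:ℝ)| ≤ 20 * K₀ + 1
      rw [abs_zero]; linarith
  have hset : {s : ℝ | ∃ L ∈ 𝒦, L.base = x ∧ s = I u x + L.apply (fun y => u y - u y)}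
      = {I u x} := by
    ext s
    simp only [Set.mem_setOf_eq, Set.mem_singleton_iff]
    constructor
    · rintro ⟨L, hL, hb, rfl⟩
      rw [mmx_apply_zero, add_zero]
    · rintro rfl
      exact ⟨⟨x, 0, 0, 0⟩, htrivmem, rfl, by rw [mmx_apply_zero, add_zero]⟩
  constructor
  · have hTlb : ∀ r ∈ {r : ℝ | ∃ v, IsC1Holder ε v ∧
        r = sSup {s : ℝ | ∃ L ∈ 𝒦, L.base = x ∧
          s = I v x + L.apply (fun y => u y - v y)}}, I u x ≤ r := by
      rintro r ⟨v, hv, rfl⟩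
      obtain ⟨L, hL, hLb, hle⟩ := keyI u v hu hv x
      obtain ⟨Cb, hCb⟩ := (main (fun y => u y - v y) (mmx_sub_holder u v hu hv) x).2
      have hbddA : BddAbove {s : ℝ | ∃ L ∈ 𝒦, L.base = x ∧
          s = I v x + L.apply (fun y => u y - v y)} := by
        refine ⟨I v x + Cb, ?_⟩
        rintro s ⟨L', hL', hLb', rfl⟩
        have := hCb L' hL' hLb'
        linarith
      exact hle.trans (le_csSup hbddA ⟨L, hL, hLb, rfl⟩)
    have hTmem : I u x ∈ {r : ℝ | ∃ v, IsC1Holder ε v ∧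
        r = sSup {s : ℝ | ∃ L ∈ 𝒦, L.base = x ∧
          s = I v x + L.apply (fun y => u y - v y)}} := by
      refine ⟨u, hu, ?_⟩
      rw [hset, csSup_singleton]
    exact le_antisymm (le_csInf ⟨_, hTmem⟩ hTlb) (csInf_le ⟨I u x, hTlb⟩ hTmem)
  · rw [hset]
    exact csSup_singleton _

end
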